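/- Let F_q be a finite field of characteristic p, let n be an odd prime different from p, and let k* be the integer nearest to n/4 (that is, k* = k if n = 4k + 1 and k* = k + 1 if n = 4k + 3). If p does not divide k*, then the polynomial F(X) = Σ_{i ∈ NR(n)} X^i, where NR(n) ⊆ {1, …, n−1} is the set of quadratic nonresidues modulo n, has unit image in F_q[X]/(Q_n). -/

import Mathlib

open Polynomial
open scoped Classical
open Finset

lemma chi_sq (n : ℕ) [Fact n.Prime] (a : ZMod n) :
    (quadraticChar (ZMod n) a) ^ 2 = if a = 0 then 0 else 1 := by
  split_ifs with h
  · simp [h]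
  · exact quadraticChar_sq_one h

lemma ringchar_ne_two (n : ℕ) [Fact n.Prime] (hn2 : n ≠ 2) : ringChar (ZMod n) ≠ 2 := by
  rw [ZMod.ringChar_zmod_n]; exact hn2

-- S4 : ∑ χ(a) χ(t - a) = -χ(-1)  for t ≠ 0
lemma S4 (n : ℕ) [Fact n.Prime] (hn2 : n ≠ 2) (t : ZMod n) (ht : t ≠ 0) :
    ∑ a : ZMod n, quadraticChar (ZMod n) a * quadraticChar (ZMod n) (t - a)
      = - quadraticChar (ZMod n) (-1) := by
  set χ := quadraticChar (ZMod n)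
  have h0 : χ (0 : ZMod n) * χ (t - 0) = 0 := by simp [χ]
  rw [← Finset.sum_erase (f := fun a => χ a * χ (t - a)) univ h0]
  have step : ∀ a ∈ (univ : Finset (ZMod n)).erase 0,
      χ a * χ (t - a) = χ (t * a⁻¹ - 1) := by
    intro a ha
    have ha0 : a ≠ 0 := Finset.ne_of_mem_erase ha
    rw [← map_mul, show a * (t - a) = a ^ 2 * (t * a⁻¹ - 1) by field_simp,
      map_mul, quadraticChar_sq_one' ha0, one_mul]
  rw [Finset.sum_congr rfl step]
  have hbij : ∑ a ∈ (univ : Finset (ZMod n)).erase 0, χ (t * a⁻¹ - 1)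
      = ∑ d ∈ (univ : Finset (ZMod n)).erase (-1), χ d := by
    apply Finset.sum_nbij' (fun a => t * a⁻¹ - 1) (fun d => t * (d + 1)⁻¹)
    · intro a ha
      have ha0 : a ≠ 0 := Finset.ne_of_mem_erase ha
      simp only [Finset.mem_erase, Finset.mem_univ, and_true]
      intro h
      have : t * a⁻¹ = 0 := by linear_combination h
      rcases mul_eq_zero.mp this with h' | h'
      · exact ht h'
      · exact ha0 (inv_eq_zero.mp h')
    · intro d hd
      have hd1 : d ≠ -1 := Finset.ne_of_mem_erase hd
      have hd1' : d + 1 ≠ 0 := fun h => hd1 (by linear_combination h)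
      simp only [Finset.mem_erase, Finset.mem_univ, and_true]
      exact mul_ne_zero ht (inv_ne_zero hd1')
    · intro a ha
      have ha0 : a ≠ 0 := Finset.ne_of_mem_erase ha
      field_simp
      rw [sub_add_cancel, div_self ht]
    · intro d hd
      have hd1 : d ≠ -1 := Finset.ne_of_mem_erase hd
      have hd1' : d + 1 ≠ 0 := fun h => hd1 (by linear_combination h)
      field_simp
      ring
    · intro a ha; rfl
  rw [hbij]
  have := quadraticChar_sum_zero (ringchar_ne_two n hn2)
  have h2 : ∑ d ∈ (univ : Finset (ZMod n)).erase (-1), χ d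
      = (∑ d : ZMod n, χ d) - χ (-1) :=
    Finset.sum_erase_eq_sub (Finset.mem_univ _)
  rw [h2, this, zero_sub]


lemma chi_one (n : ℕ) [Fact n.Prime] {a : ZMod n} (h0 : a ≠ 0) (hs : IsSquare a) :
    quadraticChar (ZMod n) a = 1 := (quadraticChar_one_iff_isSquare h0).mpr hs

lemma chi_negone (n : ℕ) [Fact n.Prime] {a : ZMod n} (hs : ¬ IsSquare a) :
    quadraticChar (ZMod n) a = -1 := quadraticChar_neg_one_iff_not_isSquare.mpr hs

-- main counting lemma
lemma count4 (n : ℕ) [Fact n.Prime] (hn2 : n ≠ 2) (t : ZMod n) (ht : t ≠ 0) :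
    4 * ((univ.filter (fun a : ZMod n =>
        (IsSquare a ∧ a ≠ 0) ∧ ¬ IsSquare (t - a))).card : ℤ)
      = (n : ℤ) - 2 + quadraticChar (ZMod n) (-1) := by
  have h1 : ∀ a : ZMod n, quadraticChar (ZMod n) a ^ 2 + quadraticChar (ZMod n) a
      = if IsSquare a ∧ a ≠ 0 then 2 else 0 := by
    intro a
    rcases eq_or_ne a 0 with h0 | h0
    · simp [h0]
    · by_cases hs : IsSquare a
      · rw [if_pos ⟨hs, h0⟩, chi_one n h0 hs]; ring
      · rw [if_neg (by tauto), chi_negone n hs]; ring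
  have h2 : ∀ b : ZMod n, quadraticChar (ZMod n) b ^ 2 - quadraticChar (ZMod n) b
      = if ¬ IsSquare b then 2 else 0 := by
    intro b
    by_cases hs : IsSquare b
    · rcases eq_or_ne b 0 with h0 | h0
      · simp [h0]
      · rw [if_neg (by tauto), chi_one n h0 hs]; ring
    · have h0 : b ≠ 0 := fun h => hs (h ▸ IsSquare.zero)
      rw [if_pos hs, chi_negone n hs]; ring
  have hf : ∀ a : ZMod n,
      (4:ℤ) * (if (IsSquare a ∧ a ≠ 0) ∧ ¬ IsSquare (t - a) then 1 else 0)
      = (quadraticChar (ZMod n) a ^ 2 + quadraticChar (ZMod n) a)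
        * (quadraticChar (ZMod n) (t - a) ^ 2 - quadraticChar (ZMod n) (t - a)) := by
    intro a
    rw [h1, h2]
    by_cases hA : IsSquare a ∧ a ≠ 0 <;> by_cases hB : IsSquare (t - a) <;>
      simp [hA, hB] <;> tauto
  have hsum : (4:ℤ) * ((univ.filter (fun a : ZMod n =>
      (IsSquare a ∧ a ≠ 0) ∧ ¬ IsSquare (t - a))).card : ℤ)
      = ∑ a : ZMod n, (quadraticChar (ZMod n) a ^ 2 + quadraticChar (ZMod n) a)
        * (quadraticChar (ZMod n) (t - a) ^ 2 - quadraticChar (ZMod n) (t - a)) := by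
    rw [← Finset.sum_congr rfl (fun a _ => hf a), ← Finset.mul_sum, Finset.sum_boole]
  rw [hsum]
  have expand : ∀ a : ZMod n,
      (quadraticChar (ZMod n) a ^ 2 + quadraticChar (ZMod n) a)
        * (quadraticChar (ZMod n) (t - a) ^ 2 - quadraticChar (ZMod n) (t - a))
      = quadraticChar (ZMod n) a ^ 2 * quadraticChar (ZMod n) (t - a) ^ 2
        + quadraticChar (ZMod n) a * quadraticChar (ZMod n) (t - a) ^ 2
        - quadraticChar (ZMod n) a ^ 2 * quadraticChar (ZMod n) (t - a)
        - quadraticChar (ZMod n) a * quadraticChar (ZMod n) (t - a) := by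
    intro a; ring
  rw [Finset.sum_congr rfl (fun a _ => expand a),
    Finset.sum_sub_distrib, Finset.sum_sub_distrib, Finset.sum_add_distrib]
  have S1 : ∑ a : ZMod n, quadraticChar (ZMod n) a ^ 2 * quadraticChar (ZMod n) (t - a) ^ 2
      = (n : ℤ) - 2 := by
    have step : ∀ a : ZMod n,
        quadraticChar (ZMod n) a ^ 2 * quadraticChar (ZMod n) (t - a) ^ 2
        = if a ≠ 0 ∧ a ≠ t then 1 else 0 := by
      intro a
      rw [chi_sq, chi_sq]
      rcases eq_or_ne a 0 with h0 | h0
      · simp [h0]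
      · rcases eq_or_ne a t with h1 | h1
        · simp [h1, sub_eq_zero]
        · have : t - a ≠ 0 := fun h => h1 (by linear_combination -h)
          simp [h0, h1, this]
    rw [Finset.sum_congr rfl (fun a _ => step a), Finset.sum_boole]
    have : (univ.filter (fun a : ZMod n => a ≠ 0 ∧ a ≠ t)) = univ \ {0, t} := by
      ext a; simp [not_or]
    rw [this, Finset.card_sdiff_of_subset (by simp)]
    have hc2 : ({0, t} : Finset (ZMod n)).card = 2 := by
      rw [Finset.card_insert_of_notMem (by simpa using (Ne.symm ht)), Finset.card_singleton]
    have hn2' : 2 ≤ Fintype.card (ZMod n) := by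
      rw [ZMod.card]; exact (Fact.out : n.Prime).two_le
    rw [hc2, Finset.card_univ, Nat.cast_sub (by omega), ZMod.card]; norm_num
  have S2 : ∑ a : ZMod n, quadraticChar (ZMod n) a * quadraticChar (ZMod n) (t - a) ^ 2
      = - quadraticChar (ZMod n) t := by
    have step : ∀ a : ZMod n,
        quadraticChar (ZMod n) a * quadraticChar (ZMod n) (t - a) ^ 2
        = if a = t then 0 else quadraticChar (ZMod n) a := by
      intro a
      rw [chi_sq]
      rcases eq_or_ne a t with h1 | h1
      · simp [h1, sub_eq_zero]
      · have : t - a ≠ 0 := fun h => h1 (by linear_combination -h)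
        simp [h1, this]
    rw [Finset.sum_congr rfl (fun a _ => step a),
      ← Finset.sum_erase (a := t) (f := fun a => if a = t then 0 else quadraticChar (ZMod n) a)
        univ (by simp),
      Finset.sum_congr rfl (fun a ha => if_neg (Finset.ne_of_mem_erase ha)),
      Finset.sum_erase_eq_sub (Finset.mem_univ t),
      quadraticChar_sum_zero (ringchar_ne_two n hn2), zero_sub]
  have S3 : ∑ a : ZMod n, quadraticChar (ZMod n) a ^ 2 * quadraticChar (ZMod n) (t - a)
      = - quadraticChar (ZMod n) t := by
    have step : ∀ a : ZMod n,
        quadraticChar (ZMod n) a ^ 2 * quadraticChar (ZMod n) (t - a)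
        = if a = 0 then 0 else quadraticChar (ZMod n) (t - a) := by
      intro a
      rw [chi_sq]
      rcases eq_or_ne a 0 with h0 | h0 <;> simp [h0]
    rw [Finset.sum_congr rfl (fun a _ => step a),
      ← Finset.sum_erase (a := (0 : ZMod n)) (f := fun a => if a = 0 then 0 else quadraticChar (ZMod n) (t - a))
        univ (by simp),
      Finset.sum_congr rfl (fun a ha => if_neg (Finset.ne_of_mem_erase ha))]
    have hbij : ∑ a ∈ (univ : Finset (ZMod n)).erase 0, quadraticChar (ZMod n) (t - a)
        = ∑ b ∈ (univ : Finset (ZMod n)).erase t, quadraticChar (ZMod n) b := by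
      apply Finset.sum_nbij' (fun a => t - a) (fun b => t - b)
      · intro a ha
        have ha0 : a ≠ 0 := Finset.ne_of_mem_erase ha
        simp only [Finset.mem_erase, Finset.mem_univ, and_true]
        intro h; exact ha0 (by linear_combination -h)
      · intro b hb
        have hb0 : b ≠ t := Finset.ne_of_mem_erase hb
        simp only [Finset.mem_erase, Finset.mem_univ, and_true]
        intro h; exact hb0 (by linear_combination -h)
      · intro a _; ring
      · intro b _; ring
      · intro a _; rfl
    rw [hbij, Finset.sum_erase_eq_sub (Finset.mem_univ t),
      quadraticChar_sum_zero (ringchar_ne_two n hn2), zero_sub]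
  rw [S1, S2, S3, S4 n hn2 t ht]
  ring

lemma two_cardS (n : ℕ) [Fact n.Prime] (hn2 : n ≠ 2) :
    2 * (univ.filter (fun a : ZMod n => IsSquare a ∧ a ≠ 0)).card + 1 = n := by
  have step : ∀ a : ZMod n, quadraticChar (ZMod n) a
      = (if IsSquare a ∧ a ≠ 0 then (1:ℤ) else 0) - (if ¬ IsSquare a then 1 else 0) := by
    intro a
    rcases eq_or_ne a 0 with h0 | h0
    · simp [h0]
    · by_cases hs : IsSquare a
      · rw [chi_one n h0 hs, if_pos ⟨hs, h0⟩, if_neg (by tauto)]; ring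
      · rw [chi_negone n hs, if_neg (by tauto), if_pos hs]; ring
  have hz := quadraticChar_sum_zero (ringchar_ne_two n hn2)
  rw [Finset.sum_congr rfl (fun a _ => step a), Finset.sum_sub_distrib,
    Finset.sum_boole, Finset.sum_boole] at hz
  have hSN : (univ.filter (fun a : ZMod n => IsSquare a ∧ a ≠ 0)).card
      = (univ.filter (fun a : ZMod n => ¬ IsSquare a)).card := by
    have h := sub_eq_zero.mp hz
    exact_mod_cast h
  have hpart : (univ.filter (fun a : ZMod n => IsSquare a)).card
      + (univ.filter (fun a : ZMod n => ¬ IsSquare a)).card = n := by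
    rw [Finset.card_filter_add_card_filter_not, Finset.card_univ, ZMod.card]
  have hins : (univ.filter (fun a : ZMod n => IsSquare a))
      = insert (0 : ZMod n) (univ.filter (fun a : ZMod n => IsSquare a ∧ a ≠ 0)) := by
    ext a
    simp only [Finset.mem_filter, Finset.mem_univ, true_and, Finset.mem_insert]
    constructor
    · intro h
      rcases eq_or_ne a 0 with h0 | h0
      · exact Or.inl h0
      · exact Or.inr ⟨h, h0⟩
    · rintro (h | h)
      · rw [h]; exact IsSquare.zero
      · exact h.1
  have h0n : (0:ZMod n) ∉ univ.filter (fun a : ZMod n => IsSquare a ∧ a ≠ 0) := by simp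
  rw [hins, Finset.card_insert_of_notMem h0n] at hpart
  omega

/-- Theorem 2: for an odd prime `n ≠ p`, if `p` does not divide the integer `k*` nearest
to `n/4`, then the quadratic-nonresidue indicator polynomial `∑_{i ∈ NR(n)} X^i` has unit
image in `F_q[X]/(Q_n)`. -/
theorem stmt7 {F : Type*} [Field F] [Fintype F] (p n k : ℕ) [Fact p.Prime] [CharP F p]
    (hn : n.Prime) (hn2 : n ≠ 2) (hnp : n ≠ p)
    (hk : (n % 4 = 1 ∧ k = n / 4) ∨ (n % 4 = 3 ∧ k = n / 4 + 1))
    (hpk : ¬ p ∣ k) :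
    IsUnit (Ideal.Quotient.mk
      (Ideal.span {(∑ i ∈ Finset.range n, X ^ i : F[X])})
      (∑ i ∈ (Finset.Ico 1 n).filter (fun i : ℕ => ¬ IsSquare ((i : ZMod n))), X ^ i)) := by
  haveI hfn : Fact n.Prime := ⟨hn⟩
  haveI : NeZero n := ⟨hn.ne_zero⟩
  set I : Ideal F[X] := Ideal.span {(∑ i ∈ Finset.range n, X ^ i : F[X])} with hIdef
  set π : F[X] →+* F[X] ⧸ I := Ideal.Quotient.mk I with hπdef
  set x : F[X] ⧸ I := π X with hxdef
  have hQ0 : π (∑ i ∈ Finset.range n, X ^ i : F[X]) = 0 :=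
    Ideal.Quotient.eq_zero_iff_mem.mpr (Ideal.subset_span rfl)
  have hsum0 : ∑ i ∈ Finset.range n, x ^ i = 0 := by
    rw [← hQ0, map_sum]
    simp [hxdef, map_pow]
  have hxn : x ^ n = 1 := by
    have h2 : π ((X - 1) * ∑ i ∈ Finset.range n, X ^ i) = π (X ^ n - 1) := by
      rw [mul_geom_sum]
    rw [map_mul, hQ0, mul_zero] at h2
    have h3 : x ^ n - 1 = 0 := by simpa [map_sub, map_pow, map_one] using h2.symm
    linear_combination h3
  have hxpow : ∀ m : ℕ, x ^ m = x ^ (m % n) := by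
    intro m
    conv_lhs => rw [← Nat.div_add_mod m n]
    rw [pow_add, pow_mul, hxn, one_pow, one_mul]
  set e : ZMod n → (F[X] ⧸ I) := fun a => x ^ a.val with hedef
  have he_add : ∀ a b : ZMod n, e (a + b) = e a * e b := by
    intro a b
    show x ^ (a + b).val = x ^ a.val * x ^ b.val
    rw [ZMod.val_add, ← hxpow, pow_add]
  have he0 : e 0 = 1 := by
    show x ^ (0 : ZMod n).val = 1
    simp
  have hesum : ∑ a : ZMod n, e a = 0 := by
    rw [← hsum0]
    apply Finset.sum_nbij' (fun a : ZMod n => a.val) (fun i : ℕ => (i : ZMod n))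
    · intro a _; exact Finset.mem_range.mpr (ZMod.val_lt a)
    · intro i _; exact Finset.mem_univ _
    · intro a _; exact ZMod.natCast_rightInverse a
    · intro i hi; exact ZMod.val_cast_of_lt (Finset.mem_range.mp hi)
    · intro a _; rfl
  set Sset : Finset (ZMod n) := univ.filter (fun a => IsSquare a ∧ a ≠ 0) with hSdef
  set Nset : Finset (ZMod n) := univ.filter (fun a => ¬ IsSquare a) with hNdef
  set η0 : F[X] ⧸ I := ∑ a ∈ Sset, e a with hη0def
  set η1 : F[X] ⧸ I := ∑ a ∈ Nset, e a with hη1def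
  have hunit : IsUnit η1 := by
    have hpartition : 1 + η0 + η1 = 0 := by
      rw [← hesum, ← Finset.sum_filter_add_sum_filter_not univ (fun a : ZMod n => IsSquare a) e]
      have hins : (univ.filter (fun a : ZMod n => IsSquare a)) = insert (0 : ZMod n) Sset := by
        ext a
        rw [hSdef]
        simp only [Finset.mem_filter, Finset.mem_univ, true_and, Finset.mem_insert]
        constructor
        · intro h
          rcases eq_or_ne a 0 with h0 | h0
          · exact Or.inl h0
          · exact Or.inr ⟨h, h0⟩
        · rintro (h | h)
          · rw [h]; exact IsSquare.zero
          · exact h.1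
      rw [hins, Finset.sum_insert (by simp [hSdef]), he0]
    have hprod : η0 * η1 = ∑ t : ZMod n,
        (((Sset ×ˢ Nset).filter (fun q : ZMod n × ZMod n => q.1 + q.2 = t)).card) • e t := by
      rw [hη0def, hη1def, Finset.sum_mul_sum, ← Finset.sum_product']
      rw [Finset.sum_congr rfl (fun (q : ZMod n × ZMod n) _ => (he_add q.1 q.2).symm),
        Finset.sum_comp e (fun q : ZMod n × ZMod n => q.1 + q.2)]
      apply Finset.sum_subset (Finset.subset_univ _)
      intro t _ ht
      have hempty : ((Sset ×ˢ Nset).filter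
          (fun q : ZMod n × ZMod n => q.1 + q.2 = t)) = ∅ := by
        rw [Finset.filter_eq_empty_iff]
        intro q hq h
        exact ht (Finset.mem_image.mpr ⟨q, hq, h⟩)
      rw [hempty]
      simp
    have herase : ∑ t ∈ (univ : Finset (ZMod n)).erase 0, e t = -1 := by
      rw [Finset.sum_erase_eq_sub (Finset.mem_univ 0), hesum, he0, zero_sub]
    have hcard_pair : ∀ t : ZMod n,
        ((Sset ×ˢ Nset).filter (fun q : ZMod n × ZMod n => q.1 + q.2 = t)).card
        = (univ.filter (fun a : ZMod n => (IsSquare a ∧ a ≠ 0) ∧ ¬ IsSquare (t - a))).card := by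
      intro t
      apply Finset.card_nbij' (fun q : ZMod n × ZMod n => q.1) (fun a : ZMod n => (a, t - a))
      · intro q hq
        rw [hSdef, hNdef] at hq
        simp only [Finset.mem_coe, Finset.mem_filter, Finset.mem_product, Finset.mem_univ, true_and] at hq ⊢
        obtain ⟨⟨hq1, hq2⟩, hq3⟩ := hq
        refine ⟨hq1, ?_⟩
        have h5 : t - q.1 = q.2 := by linear_combination -hq3
        rw [h5]; exact hq2
      · intro a ha
        rw [hSdef, hNdef]
        simp only [Finset.mem_coe, Finset.mem_filter, Finset.mem_product, Finset.mem_univ, true_and] at ha ⊢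
        exact ⟨⟨ha.1, ha.2⟩, by ring⟩
      · intro q hq
        simp only [Finset.mem_coe, Finset.mem_filter] at hq
        have h5 : t - q.1 = q.2 := by linear_combination -hq.2
        exact Prod.ext rfl h5
      · intro a _; rfl
    -- key identity with sign depending on the case
    have key : η1 * (η1 + 1) = (k : F[X] ⧸ I) ∨ η1 * (η1 + 1) = -(k : F[X] ⧸ I) := by
      rcases hk with ⟨h4, hkdef⟩ | ⟨h4, hkdef⟩
      · -- n = 4k+1
        left
        have hn4 : n = 4 * k + 1 := by omega
        have hsq : IsSquare (-1 : ZMod n) := ZMod.exists_sq_eq_neg_one_iff.mpr (by omega)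
        have hneg1ne : (-1 : ZMod n) ≠ 0 := by
          simp only [ne_eq, neg_eq_zero]
          exact one_ne_zero
        have hchi : quadraticChar (ZMod n) (-1) = 1 :=
          (quadraticChar_one_iff_isSquare hneg1ne).mpr hsq
        have hfiber : ∀ t : ZMod n, t ≠ 0 →
            ((Sset ×ˢ Nset).filter (fun q : ZMod n × ZMod n => q.1 + q.2 = t)).card = k := by
          intro t ht
          have h5 := count4 n hn2 t ht
          rw [hchi] at h5
          rw [hcard_pair t]
          have h6 : (n : ℤ) = 4 * k + 1 := by exact_mod_cast congrArg (Nat.cast : ℕ → ℤ) hn4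
          omega
        have hfiber0 : ((Sset ×ˢ Nset).filter
            (fun q : ZMod n × ZMod n => q.1 + q.2 = 0)).card = 0 := by
          rw [Finset.card_eq_zero, Finset.filter_eq_empty_iff]
          intro q hq h
          rw [hSdef, hNdef] at hq
          simp only [Finset.mem_filter, Finset.mem_product, Finset.mem_univ, true_and] at hq
          obtain ⟨⟨hq1, _⟩, hq2⟩ := hq
          apply hq2
          have h5 : q.2 = (-1) * q.1 := by linear_combination h
          rw [h5]
          exact hsq.mul hq1
        have hprodval : η0 * η1 = -(k : F[X] ⧸ I) := by
          rw [hprod, ← Finset.add_sum_erase univ _ (Finset.mem_univ (0 : ZMod n)), hfiber0,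
            zero_smul, zero_add,
            Finset.sum_congr rfl (fun t ht => by
              rw [hfiber t (Finset.ne_of_mem_erase ht)]),
            ← Finset.smul_sum, herase]
          simp
        linear_combination η1 * hpartition - hprodval
      · -- n = 4k' + 3, k = k' + 1
        right
        set k' := n / 4 with hk'def
        have hn4 : n = 4 * k' + 3 := by omega
        have hnsq : ¬ IsSquare (-1 : ZMod n) := by
          rw [ZMod.exists_sq_eq_neg_one_iff]
          omega
        have hchi : quadraticChar (ZMod n) (-1) = -1 :=
          quadraticChar_neg_one_iff_not_isSquare.mpr hnsq
        have hfiber : ∀ t : ZMod n, t ≠ 0 →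
            ((Sset ×ˢ Nset).filter (fun q : ZMod n × ZMod n => q.1 + q.2 = t)).card = k' := by
          intro t ht
          have h5 := count4 n hn2 t ht
          rw [hchi] at h5
          rw [hcard_pair t]
          have h6 : (n : ℤ) = 4 * k' + 3 := by exact_mod_cast congrArg (Nat.cast : ℕ → ℤ) hn4
          omega
        have hfiber0 : ((Sset ×ˢ Nset).filter
            (fun q : ZMod n × ZMod n => q.1 + q.2 = 0)).card = 2 * k' + 1 := by
          have hbij : ((Sset ×ˢ Nset).filter
              (fun q : ZMod n × ZMod n => q.1 + q.2 = 0)).card = Sset.card := by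
            apply Finset.card_nbij' (fun q : ZMod n × ZMod n => q.1)
              (fun a : ZMod n => (a, -a))
            · intro q hq
              simp only [Finset.mem_coe, Finset.mem_filter, Finset.mem_product] at hq
              exact hq.1.1
            · intro a ha
              rw [hSdef] at ha
              simp only [Finset.mem_coe, Finset.mem_filter, Finset.mem_univ, true_and] at ha
              obtain ⟨hs, h0⟩ := ha
              rw [hSdef, hNdef]
              simp only [Finset.mem_coe, Finset.mem_filter, Finset.mem_product, Finset.mem_univ, true_and]
              refine ⟨⟨⟨hs, h0⟩, ?_⟩, by ring⟩
              intro hsq'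
              apply hnsq
              have h5 : (-1 : ZMod n) = (-a) * a⁻¹ := by
                field_simp
              rw [h5]
              exact hsq'.mul hs.inv
            · intro q hq
              simp only [Finset.mem_coe, Finset.mem_filter] at hq
              have h5 : -q.1 = q.2 := by linear_combination -hq.2
              exact Prod.ext rfl h5
            · intro a _; rfl
          rw [hbij]
          have := two_cardS n hn2
          rw [← hSdef] at this
          omega
        have hprodval : η0 * η1 = (k : F[X] ⧸ I) := by
          rw [hprod, ← Finset.add_sum_erase univ _ (Finset.mem_univ (0 : ZMod n)), hfiber0,
            Finset.sum_congr rfl (fun t ht => by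
              rw [hfiber t (Finset.ne_of_mem_erase ht)]),
            ← Finset.smul_sum, herase, he0, hkdef]
          push_cast
          ring
        linear_combination η1 * hpartition - hprodval
    have hkF : (k : F) ≠ 0 := fun h => hpk ((CharP.cast_eq_zero_iff F p k).mp h)
    have hkUnit : IsUnit ((k : F[X] ⧸ I)) := by
      have h1 : IsUnit (k : F) := isUnit_iff_ne_zero.mpr hkF
      have h2 := h1.map (algebraMap F (F[X] ⧸ I))
      rwa [map_natCast] at h2
    rcases key with h | h
    · exact isUnit_of_mul_isUnit_left (h ▸ hkUnit)
    · refine isUnit_of_mul_isUnit_left (M := F[X] ⧸ I) (y := η1 + 1) ?_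
      rw [h]
      exact hkUnit.neg

  convert hunit using 1
  rw [map_sum]
  simp only [map_pow]
  rw [hη1def]
  apply Finset.sum_nbij' (fun i : ℕ => (i : ZMod n)) (fun a : ZMod n => a.val)
  · intro i hi
    simp only [Finset.mem_filter, Finset.mem_Ico] at hi
    rw [hNdef]
    simp only [Finset.mem_filter, Finset.mem_univ, true_and]
    exact hi.2
  · intro a ha
    rw [hNdef] at ha
    simp only [Finset.mem_filter, Finset.mem_univ, true_and] at ha
    have ha0 : a ≠ 0 := fun h => ha (h ▸ IsSquare.zero)
    simp only [Finset.mem_filter, Finset.mem_Ico]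
    refine ⟨⟨?_, ZMod.val_lt a⟩, ?_⟩
    · have := (ZMod.val_eq_zero a).not.mpr ha0; omega
    · rw [ZMod.natCast_rightInverse a]; exact ha
  · intro i hi
    simp only [Finset.mem_filter, Finset.mem_Ico] at hi
    exact ZMod.val_cast_of_lt hi.1.2
  · intro a _; exact ZMod.natCast_rightInverse a
  · intro i hi
    simp only [Finset.mem_filter, Finset.mem_Ico] at hi
    show (x : F[X] ⧸ I) ^ i = x ^ ((i : ZMod n)).val
    rw [ZMod.val_cast_of_lt hi.1.2]
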